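/- Let L be a complete lattice in which every element is the supremum of a set of compact elements (L is algebraic/compactly generated). Then L is arrow-separated: for all x, y ∈ L with x < y there exist u, v ∈ L with x ≤ u, u ⋖ v (v covers u), and v ≤ y. -/

import Mathlib

/-- If `L` is a complete lattice in which every element is the supremum of a set of
compact elements (i.e. `L` is algebraic), then `L` is arrow-separated: whenever
`x < y` there is a covering pair `u ⋖ v` with `x ≤ u` and `v ≤ y`. -/
theorem algebraic_arrow_separated {L : Type*} [CompleteLattice L]
    (halg : ∀ x : L, ∃ S : Set L,
      (∀ c ∈ S, ∀ U : Set L, c ≤ sSup U → ∃ F ⊆ U, F.Finite ∧ c ≤ sSup F) ∧ x = sSup S) :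
    ∀ x y : L, x < y → ∃ u v : L, x ≤ u ∧ u ⋖ v ∧ v ≤ y := by
  intro x y hxy
  obtain ⟨S, hScomp, hS⟩ := halg y
  -- find a compact c ∈ S with c ≰ x
  have hex : ∃ c ∈ S, ¬ c ≤ x := by
    by_contra h
    push_neg at h
    exact absurd (hS ▸ sSup_le h) (hxy.not_ge)
  obtain ⟨c, hcS, hcx⟩ := hex
  have hcy : c ≤ y := hS ▸ le_sSup hcS
  have hcomp := hScomp c hcS
  set P : Set L := {z | x ≤ z ∧ z ≤ x ⊔ c ∧ ¬ c ≤ z} with hP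
  have hxP : x ∈ P := ⟨le_rfl, le_sup_left, hcx⟩
  obtain ⟨u, hxu, humax⟩ : ∃ u, x ≤ u ∧ Maximal (· ∈ P) u := by
    apply zorn_le_nonempty₀ P ?_ x hxP
    intro ch hchP hchain z hz
    refine ⟨sSup ch, ⟨le_trans (hchP hz).1 (le_sSup hz), sSup_le fun w hw => (hchP hw).2.1, ?_⟩,
      fun w hw => le_sSup hw⟩
    intro hcle
    obtain ⟨F, hFch, hFfin, hcF⟩ := hcomp ch hcle
    rcases F.eq_empty_or_nonempty with rfl | hFne
    · rw [sSup_empty] at hcF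
      exact hcx (hcF.trans bot_le)
    · obtain ⟨m, hmF, hm⟩ := Set.Finite.exists_maximalFor id F hFfin hFne
      have hmax : ∀ w ∈ F, w ≤ m := by
        intro w hw
        rcases hchain.total (hFch hw) (hFch hmF) with h | h
        · exact h
        · exact (hm hw h).ge
      exact (hchP (hFch hmF)).2.2 (hcF.trans (sSup_le hmax))
  have huP : u ∈ P := humax.1
  refine ⟨u, u ⊔ c, hxu, ⟨left_lt_sup.2 huP.2.2, ?_⟩, ?_⟩
  · intro w huw hwv
    have hcw : c ≤ w := by
      by_contra h
      exact huw.not_ge (humax.2 ⟨hxu.trans huw.le,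
        hwv.le.trans (sup_le huP.2.1 le_sup_right), h⟩ huw.le)
    exact hwv.not_ge (sup_le huw.le hcw)
  · exact (sup_le huP.2.1 le_sup_right).trans (sup_le hxy.le hcy)
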